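/- For φ(t) = tanh(t)², the inequality φ'(t)² ≥ 2 φ(t) φ''(t) holds for all real t. -/

import Mathlib

lemma my_hasDerivAt_tanh (t : ℝ) :
    HasDerivAt Real.tanh (1 - Real.tanh t ^ 2) t := by
  have hc : Real.cosh t ≠ 0 := (Real.cosh_pos t).ne'
  have h := (Real.hasDerivAt_sinh t).div (Real.hasDerivAt_cosh t) hc
  have hfun : (fun x => Real.sinh x / Real.cosh x) = Real.tanh := by
    funext x; rw [Real.tanh_eq_sinh_div_cosh]
  rw [show (Real.sinh / Real.cosh) = Real.tanh from hfun] at h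
  refine h.congr_deriv ?_
  have h1 : Real.cosh t ^ 2 - Real.sinh t ^ 2 = 1 := Real.cosh_sq_sub_sinh_sq t
  rw [Real.tanh_eq_sinh_div_cosh]
  field_simp

lemma my_deriv_tanh_sq :
    deriv (fun s => Real.tanh s ^ 2) = fun t => 2 * Real.tanh t * (1 - Real.tanh t ^ 2) := by
  funext t
  have h : HasDerivAt (fun s => Real.tanh s ^ 2) _ t := (my_hasDerivAt_tanh t).pow 2
  simpa using h.deriv

theorem tanh_sq_deriv_ineq :
    ∀ t : ℝ,
      (deriv (fun s => Real.tanh s ^ 2) t) ^ 2 ≥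
        2 * (Real.tanh t ^ 2) * deriv (deriv (fun s => Real.tanh s ^ 2)) t := by
  intro t
  rw [my_deriv_tanh_sq]
  have h := my_hasDerivAt_tanh t
  have h2 : HasDerivAt (fun s => 2 * Real.tanh s * (1 - Real.tanh s ^ 2))
      (2 * (1 - Real.tanh t ^ 2) - 2 * (3 * Real.tanh t ^ 2 * (1 - Real.tanh t ^ 2))) t := by
    have h3 := ((h.const_mul 2).sub ((h.pow 3).const_mul 2))
    have hfun : (fun s => 2 * Real.tanh s - 2 * Real.tanh s ^ 3)
        = fun s => 2 * Real.tanh s * (1 - Real.tanh s ^ 2) := by funext s; ring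
    rw [show ((fun y => 2 * Real.tanh y) - fun y => 2 * (Real.tanh ^ 3) y) = fun s => 2 * Real.tanh s * (1 - Real.tanh s ^ 2) from hfun] at h3
    exact h3.congr_deriv (by norm_num)
  rw [h2.deriv]
  set u := Real.tanh t ^ 2 with hu
  have hu0 : 0 ≤ u := sq_nonneg _
  have hc : 0 < 1 - u := by
    have hcp : 0 < Real.cosh t := Real.cosh_pos t
    have h1 : Real.cosh t ^ 2 - Real.sinh t ^ 2 = 1 := Real.cosh_sq_sub_sinh_sq t
    have ht : Real.tanh t = Real.sinh t / Real.cosh t := Real.tanh_eq_sinh_div_cosh t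
    rw [hu, ht, div_pow]
    rw [sub_pos, div_lt_one (by positivity)]
    nlinarith
  have key : (2 * Real.tanh t * (1 - u)) ^ 2
      - 2 * u * (2 * (1 - u) - 2 * (3 * u * (1 - u))) = 8 * u ^ 2 * (1 - u) := by
    rw [hu]; ring
  show (2 * Real.tanh t * (1 - Real.tanh t ^ 2)) ^ 2 ≥ _
  rw [← hu]
  nlinarith [mul_nonneg (mul_nonneg hu0 hu0) hc.le]
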